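/- arXiv:2212.01544 — 2 statements merged into one kernel-verified Lean document; each statement's English description precedes it below -/
import Mathlib

section
/- Let X be a real random variable whose distribution is continuous at the point x (i.e., P(X = x) = 0). Then the Gil-Pelaez inversion formula holds: P(X ≤ x) = ½ − (1/π)·∫₀^∞ Im(exp(−i·t·x)·φ(t))/t dt, where the integral is an improper (principal value) integral and φ is the characteristic function of X. -/
open MeasureTheory Complex Filter

open intervalIntegral Set
open Real hiding sinc abs_sinc_le_one sinc_neg

noncomputable def sinc (t : ℝ) : ℝ := Real.sin t / t

lemma abs_sinc_le_one (t : ℝ) : |sinc t| ≤ 1 := by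
  rcases eq_or_ne t 0 with h | h
  · simp [sinc, h]
  · rw [sinc, abs_div, div_le_one (abs_pos.mpr h)]
    exact Real.abs_sin_le_abs

lemma sinc_neg (t : ℝ) : sinc (-t) = sinc t := by
  simp [sinc, Real.sin_neg, neg_div_neg_eq]

lemma measurable_sinc : Measurable sinc :=
  Real.measurable_sin.div measurable_id

lemma intervalIntegrable_sinc (a b : ℝ) : IntervalIntegrable sinc volume a b := by
  rw [intervalIntegrable_iff]
  haveI : IsFiniteMeasure (volume.restrict (Set.uIoc a b)) := by
    constructor
    rw [Measure.restrict_apply_univ]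
    exact measure_Ioc_lt_top
  refine Integrable.mono' (integrable_const 1) measurable_sinc.aestronglyMeasurable.restrict ?_
  exact Filter.Eventually.of_forall fun t => by simpa using abs_sinc_le_one t

noncomputable def Si (c : ℝ) : ℝ := ∫ t in (0:ℝ)..c, sinc t

lemma abs_Si_le (c : ℝ) : |Si c| ≤ |c| := by
  have h : ∀ t ∈ Set.uIoc (0:ℝ) c, ‖sinc t‖ ≤ 1 := fun t _ => by simpa using abs_sinc_le_one t
  have := intervalIntegral.norm_integral_le_of_norm_le_const h
  calc |Si c| ≤ 1 * |c - 0| := by simpa [Si, Real.norm_eq_abs] using this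
  _ = |c| := by simp

lemma Si_neg (c : ℝ) : Si (-c) = - Si c := by
  have : Si (-c) = -∫ t in (-c)..(0:ℝ), sinc t := by
    rw [Si, intervalIntegral.integral_symm]
  rw [this]
  congr 1
  have h2 := intervalIntegral.integral_comp_neg (a := 0) (b := c) (fun t => sinc t)
  simp only [sinc_neg, neg_zero] at h2
  rw [← h2, Si]

lemma continuous_Si : Continuous Si :=
  intervalIntegral.continuous_primitive (fun a b => intervalIntegrable_sinc a b) 0

lemma tendsto_Si_zero : Tendsto Si (nhds 0) (nhds 0) := by
  have : Tendsto (fun c : ℝ => |c|) (nhds 0) (nhds 0) := by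
    simpa using (_root_.continuous_abs.tendsto (0:ℝ))
  exact squeeze_zero_norm (fun c => by simpa [Real.norm_eq_abs] using abs_Si_le c) this

lemma integral_exp_mul_sin (s a : ℝ) :
    ∫ t in (0:ℝ)..a, Real.exp (-(s*t)) * Real.sin t
      = (1 - Real.exp (-(s*a)) * (Real.cos a + s * Real.sin a)) / (1+s^2) := by
  have hs : (1:ℝ) + s^2 ≠ 0 := by positivity
  set F : ℝ → ℝ := fun t => -(Real.exp (-(s*t)) * (s * Real.sin t + Real.cos t)) / (1+s^2) with hF
  have hderiv : ∀ t ∈ uIcc 0 a, HasDerivAt F (Real.exp (-(s*t)) * Real.sin t) t := by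
    intro t _
    have h1 : HasDerivAt (fun u : ℝ => -(s*u)) (-s) t := by
      simpa using (hasDerivAt_id t).const_mul (-s)
    have hexp : HasDerivAt (fun u : ℝ => Real.exp (-(s*u))) (Real.exp (-(s*t)) * (-s)) t :=
      h1.exp
    have hsc : HasDerivAt (fun u : ℝ => s * Real.sin u + Real.cos u)
        (s * Real.cos t + -Real.sin t) t :=
      ((Real.hasDerivAt_sin t).const_mul s).add (Real.hasDerivAt_cos t)
    have H : HasDerivAt (fun u => -(Real.exp (-(s*u)) * (s * Real.sin u + Real.cos u)) / (1+s^2)) _ t :=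
      ((hexp.mul hsc).neg).div_const (1+s^2)
    convert H using 1
    rw [eq_div_iff hs]
    ring
  have hcont : IntervalIntegrable (fun t => Real.exp (-(s*t)) * Real.sin t) volume 0 a :=
    (Continuous.intervalIntegrable (by continuity) 0 a)
  rw [intervalIntegral.integral_eq_sub_of_hasDerivAt hderiv hcont]
  simp only [hF]
  rw [mul_zero, neg_zero, Real.exp_zero, Real.sin_zero, Real.cos_zero]
  ring

lemma integral_exp_neg_mul_Ioi {t : ℝ} (ht : 0 < t) :
    ∫ s in Ioi (0:ℝ), Real.exp (-(t*s)) = 1/t := by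
  have h := MeasureTheory.integral_comp_mul_left_Ioi (fun u => Real.exp (-u)) 0 ht
  simp only [mul_zero, neg_zero, integral_exp_neg_Ioi, Real.exp_zero, smul_eq_mul, mul_one] at h
  rw [h]; field_simp

lemma Si_eq_sub (a : ℝ) (ha : 0 < a) :
    Si a = π/2 - ∫ s in Ioi (0:ℝ),
      Real.exp (-(s*a)) * (Real.cos a + s * Real.sin a) / (1+s^2) := by
  have h0 : Si a = ∫ t in Ioc (0:ℝ) a, sinc t := by
    rw [Si, intervalIntegral.integral_of_le ha.le]
  have hstep : ∫ t in Ioc (0:ℝ) a, sinc t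
      = ∫ t in Ioc (0:ℝ) a, ∫ s in Ioi (0:ℝ), Real.sin t * Real.exp (-(t*s)) := by
    refine setIntegral_congr_fun measurableSet_Ioc (fun t ht => ?_)
    rw [MeasureTheory.integral_const_mul, integral_exp_neg_mul_Ioi ht.1, sinc]
    ring
  have hInt : Integrable (Function.uncurry fun t s => Real.sin t * Real.exp (-(t*s)))
      ((volume.restrict (Ioc (0:ℝ) a)).prod (volume.restrict (Ioi (0:ℝ)))) := by
    have hmeas : AEStronglyMeasurable (Function.uncurry fun t s => Real.sin t * Real.exp (-(t*s)))
        ((volume.restrict (Ioc (0:ℝ) a)).prod (volume.restrict (Ioi (0:ℝ)))) := by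
      apply Continuous.aestronglyMeasurable
      apply Continuous.mul
      · exact Real.continuous_sin.comp continuous_fst
      · exact Real.continuous_exp.comp (continuous_fst.mul continuous_snd).neg
    rw [integrable_prod_iff hmeas]
    constructor
    · filter_upwards [ae_restrict_mem measurableSet_Ioc] with t ht
      have : IntegrableOn (fun s => Real.exp (-(t*s))) (Ioi (0:ℝ)) volume := by
        have := exp_neg_integrableOn_Ioi 0 ht.1
        refine this.congr_fun (fun s _ => by ring_nf) measurableSet_Ioi
      exact (this.const_mul (Real.sin t))
    · have hsin : IntegrableOn (fun t => |sinc t|) (Ioc (0:ℝ) a) volume := by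
        have : IntegrableOn sinc (Ioc (0:ℝ) a) volume :=
          (intervalIntegrable_iff_integrableOn_Ioc_of_le ha.le).1 (intervalIntegrable_sinc 0 a)
        exact this.abs
      refine hsin.congr ?_
      filter_upwards [ae_restrict_mem measurableSet_Ioc] with t ht
      symm
      have h1 : ∀ s, ‖Real.sin t * Real.exp (-(t*s))‖ = |Real.sin t| * Real.exp (-(t*s)) := by
        intro s
        rw [norm_mul, Real.norm_eq_abs, Real.norm_eq_abs, Real.abs_exp]
      simp only [Function.uncurry]
      calc ∫ s in Ioi (0:ℝ), ‖Real.sin t * Real.exp (-(t*s))‖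
          = ∫ s in Ioi (0:ℝ), |Real.sin t| * Real.exp (-(t*s)) := by simp only [h1]
        _ = |Real.sin t| * (1/t) := by rw [MeasureTheory.integral_const_mul, integral_exp_neg_mul_Ioi ht.1]
        _ = |sinc t| := by
            rw [sinc, abs_div, abs_of_pos ht.1]; ring
  have hswap := integral_integral_swap hInt
  have hinner : ∫ s in Ioi (0:ℝ), ∫ t in Ioc (0:ℝ) a, Real.sin t * Real.exp (-(t*s))
      = ∫ s in Ioi (0:ℝ), ((1+s^2)⁻¹ - Real.exp (-(s*a)) * (Real.cos a + s * Real.sin a) / (1+s^2)) := by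
    refine setIntegral_congr_fun measurableSet_Ioi (fun s _ => ?_)
    have : ∫ t in Ioc (0:ℝ) a, Real.sin t * Real.exp (-(t*s))
        = ∫ t in (0:ℝ)..a, Real.exp (-(s*t)) * Real.sin t := by
      rw [intervalIntegral.integral_of_le ha.le]
      exact setIntegral_congr_fun measurableSet_Ioc (fun t _ => by rw [mul_comm t s]; ring)
    rw [this, integral_exp_mul_sin]
    have hs : (1:ℝ) + s^2 ≠ 0 := by positivity
    field_simp
  have herr : Integrable (fun s => Real.exp (-(s*a)) * (Real.cos a + s * Real.sin a) / (1+s^2))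
      (volume.restrict (Ioi (0:ℝ))) := by
    refine Integrable.mono' (g := fun s => 2 * Real.exp (-a*s))
      ((exp_neg_integrableOn_Ioi 0 ha).const_mul 2) ?_ ?_
    · apply Continuous.aestronglyMeasurable
      have h1 : Continuous fun s : ℝ => Real.exp (-(s*a)) := by continuity
      have h2 : Continuous fun s : ℝ => Real.cos a + s * Real.sin a := by continuity
      have h3 : Continuous fun s : ℝ => ((1:ℝ)+s^2)⁻¹ := by
        apply Continuous.inv₀ (by continuity)
        intro s; positivity
      simp only [div_eq_mul_inv]
      exact (h1.mul h2).mul h3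
    · filter_upwards [ae_restrict_mem measurableSet_Ioi] with s hs
      have hs0 : (0:ℝ) < s := hs
      have hd : (0:ℝ) < 1 + s^2 := by positivity
      rw [Real.norm_eq_abs, abs_div, abs_of_pos hd, abs_mul, Real.abs_exp]
      have hb : |Real.cos a + s * Real.sin a| ≤ 1 + s := by
        calc |Real.cos a + s * Real.sin a| ≤ |Real.cos a| + |s * Real.sin a| := abs_add_le _ _
          _ ≤ 1 + s := by
              have := Real.abs_cos_le_one a
              have h4 : |s * Real.sin a| ≤ s := by
                rw [abs_mul, abs_of_pos hs0]
                nlinarith [Real.abs_sin_le_one a, abs_nonneg (Real.sin a)]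
              linarith
      have hexp : Real.exp (-(s*a)) = Real.exp (-a*s) := by ring_nf
      rw [hexp]
      rw [div_le_iff₀ hd]
      have he : (0:ℝ) < Real.exp (-a*s) := Real.exp_pos _
      have h5 : (1:ℝ) + s ≤ 2*(1+s^2) := by nlinarith [sq_nonneg (2*s-1)]
      calc Real.exp (-a*s) * |Real.cos a + s * Real.sin a|
          ≤ Real.exp (-a*s) * (1+s) := mul_le_mul_of_nonneg_left hb he.le
        _ ≤ Real.exp (-a*s) * (2*(1+s^2)) := mul_le_mul_of_nonneg_left h5 he.le
        _ = 2 * Real.exp (-a*s) * (1+s^2) := by ring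
  have hsplit : ∫ s in Ioi (0:ℝ),
        ((1+s^2)⁻¹ - Real.exp (-(s*a)) * (Real.cos a + s * Real.sin a) / (1+s^2))
      = π/2 - ∫ s in Ioi (0:ℝ), Real.exp (-(s*a)) * (Real.cos a + s * Real.sin a) / (1+s^2) := by
    rw [integral_sub integrable_inv_one_add_sq.restrict herr]
    congr 1
    rw [integral_Ioi_inv_one_add_sq, Real.arctan_zero, sub_zero]
  rw [h0, hstep, hswap, hinner, hsplit]

lemma abs_Si_sub_le (a : ℝ) (ha : 0 < a) : |Si a - π/2| ≤ 2/a := by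
  rw [Si_eq_sub a ha]
  have h1 : π/2 - (∫ s in Ioi (0:ℝ),
      Real.exp (-(s*a)) * (Real.cos a + s * Real.sin a) / (1+s^2)) - π/2
      = -(∫ s in Ioi (0:ℝ), Real.exp (-(s*a)) * (Real.cos a + s * Real.sin a) / (1+s^2)) := by
    ring
  rw [h1, abs_neg]
  have hb : Integrable (fun s => 2 * Real.exp (-a*s)) (volume.restrict (Ioi (0:ℝ))) :=
    (exp_neg_integrableOn_Ioi 0 ha).const_mul 2
  have key : ‖∫ s in Ioi (0:ℝ), Real.exp (-(s*a)) * (Real.cos a + s * Real.sin a) / (1+s^2)‖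
      ≤ ∫ s in Ioi (0:ℝ), 2 * Real.exp (-a*s) := by
    refine norm_integral_le_of_norm_le hb ?_
    filter_upwards [ae_restrict_mem measurableSet_Ioi] with s hs
    have hs0 : (0:ℝ) < s := hs
    have hd : (0:ℝ) < 1 + s^2 := by positivity
    rw [Real.norm_eq_abs, abs_div, abs_of_pos hd, abs_mul, Real.abs_exp]
    have hb2 : |Real.cos a + s * Real.sin a| ≤ 1 + s := by
      calc |Real.cos a + s * Real.sin a| ≤ |Real.cos a| + |s * Real.sin a| := abs_add_le _ _
        _ ≤ 1 + s := by
            have := Real.abs_cos_le_one a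
            have h4 : |s * Real.sin a| ≤ s := by
              rw [abs_mul, abs_of_pos hs0]
              nlinarith [Real.abs_sin_le_one a, abs_nonneg (Real.sin a)]
            linarith
    have hexp : Real.exp (-(s*a)) = Real.exp (-a*s) := by ring_nf
    rw [hexp, div_le_iff₀ hd]
    have he : (0:ℝ) < Real.exp (-a*s) := Real.exp_pos _
    have h5 : (1:ℝ) + s ≤ 2*(1+s^2) := by nlinarith [sq_nonneg (2*s-1)]
    calc Real.exp (-a*s) * |Real.cos a + s * Real.sin a|
        ≤ Real.exp (-a*s) * (1+s) := mul_le_mul_of_nonneg_left hb2 he.le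
      _ ≤ Real.exp (-a*s) * (2*(1+s^2)) := mul_le_mul_of_nonneg_left h5 he.le
      _ = 2 * Real.exp (-a*s) * (1+s^2) := by ring
  have hval : ∫ s in Ioi (0:ℝ), 2 * Real.exp (-a*s) = 2/a := by
    rw [MeasureTheory.integral_const_mul]
    have : ∫ s in Ioi (0:ℝ), Real.exp (-a*s) = ∫ s in Ioi (0:ℝ), Real.exp (-(a*s)) := by
      congr 1; funext s; ring_nf
    rw [this, integral_exp_neg_mul_Ioi ha]
    ring
  calc |∫ s in Ioi (0:ℝ), Real.exp (-(s*a)) * (Real.cos a + s * Real.sin a) / (1+s^2)|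
      ≤ ∫ s in Ioi (0:ℝ), 2 * Real.exp (-a*s) := key
    _ = 2/a := hval

lemma tendsto_Si_atTop : Tendsto Si atTop (nhds (π/2)) := by
  have h0 : Tendsto (fun a : ℝ => Si a - π/2) atTop (nhds 0) := by
    refine squeeze_zero_norm' (a := fun a : ℝ => 2/a) ?_ ?_
    · filter_upwards [eventually_gt_atTop (0:ℝ)] with a ha
      exact abs_Si_sub_le a ha
    · exact Tendsto.div_atTop tendsto_const_nhds tendsto_id
  have := h0.add_const (π/2)
  simpa using this

lemma tendsto_Si_atBot : Tendsto Si atBot (nhds (-(π/2))) := by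
  have h0 : Tendsto (fun c : ℝ => Si (-c)) atBot (nhds (π/2)) :=
    tendsto_Si_atTop.comp tendsto_neg_atBot_atTop
  have h1 : Tendsto (fun c : ℝ => -Si (-c)) atBot (nhds (-(π/2))) := h0.neg
  refine h1.congr (fun c => ?_)
  rw [Si_neg, neg_neg]

lemma abs_Si_le_const (c : ℝ) : |Si c| ≤ π/2 + 2 := by
  have hpos : ∀ b : ℝ, 0 ≤ b → |Si b| ≤ π/2 + 2 := by
    intro b hb
    rcases le_or_gt b 2 with h | h
    · calc |Si b| ≤ |b| := abs_Si_le b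
        _ ≤ 2 := by rw [_root_.abs_of_nonneg hb]; exact h
        _ ≤ π/2 + 2 := by nlinarith [Real.pi_pos]
    · have := abs_Si_sub_le b (by linarith)
      have h2 : 2/b ≤ 1 := by
        rw [div_le_one (by linarith)]; linarith
      calc |Si b| = |(Si b - π/2) + π/2| := by ring_nf
        _ ≤ |Si b - π/2| + |π/2| := abs_add_le _ _
        _ ≤ 1 + π/2 := by
            have hp : |π/2| = π/2 := abs_of_pos (by positivity)
            linarith
        _ ≤ π/2 + 2 := by linarith
  rcases le_or_gt 0 c with h | h
  · exact hpos c h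
  · have := hpos (-c) (by linarith)
    rwa [Si_neg, abs_neg] at this

lemma integral_sin_mul_div (ε a y : ℝ) (hy : y ≠ 0) :
    ∫ t in ε..a, Real.sin (t*y)/t = Si (a*y) - Si (ε*y) := by
  have hpt : ∀ t : ℝ, Real.sin (t*y)/t = y * sinc (t*y) := by
    intro t
    rcases eq_or_ne t 0 with h | h
    · simp [h, sinc]
    · rw [sinc]
      field_simp
  have h1 : ∫ t in ε..a, Real.sin (t*y)/t = ∫ t in ε..a, y * sinc (t*y) := by
    simp only [hpt]
  have h2 := intervalIntegral.integral_comp_mul_right (a := ε) (b := a) sinc hy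
  have h3 : Si (a*y) - Si (ε*y) = ∫ u in (ε*y)..(a*y), sinc u := by
    rw [Si, Si]
    exact intervalIntegral.integral_interval_sub_left
      (intervalIntegrable_sinc 0 (a*y)) (intervalIntegrable_sinc 0 (ε*y))
  rw [h1, intervalIntegral.integral_const_mul, h2, h3, smul_eq_mul]
  field_simp

lemma gil_aux_char {Ω : Type*} [MeasurableSpace Ω] (μ : Measure Ω) [IsProbabilityMeasure μ]
    (X : Ω → ℝ) (hX : Measurable X) (x t : ℝ) :
    (Complex.exp (-(Complex.I * t * x)) * ∫ ω, Complex.exp (Complex.I * t * X ω) ∂μ).im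
      = ∫ ω, Real.sin (t * (X ω - x)) ∂μ := by
  have hcomb : ∀ ω, Complex.exp (-(Complex.I * t * x)) * Complex.exp (Complex.I * t * X ω)
      = Complex.exp (((t * (X ω - x) : ℝ) : ℂ) * Complex.I) := by
    intro ω
    rw [← Complex.exp_add]
    congr 1
    push_cast
    ring
  have hint : Integrable (fun ω => Complex.exp (((t * (X ω - x) : ℝ) : ℂ) * Complex.I)) μ := by
    refine Integrable.mono' (integrable_const 1) ?_ ?_
    · refine (Complex.measurable_exp.comp ?_).aestronglyMeasurable
      exact (Complex.measurable_ofReal.comp ((hX.sub_const x).const_mul t)).mul_const Complex.I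
    · refine Filter.Eventually.of_forall fun ω => ?_
      rw [Complex.norm_exp_ofReal_mul_I]
  rw [← MeasureTheory.integral_const_mul]
  simp only [hcomb]
  calc (∫ ω, Complex.exp (((t * (X ω - x) : ℝ) : ℂ) * Complex.I) ∂μ).im
      = ∫ ω, (Complex.exp (((t * (X ω - x) : ℝ) : ℂ) * Complex.I)).im ∂μ :=
        (integral_im hint).symm
    _ = ∫ ω, Real.sin (t * (X ω - x)) ∂μ := by
        congr 1
        funext ω
        exact Complex.exp_ofReal_mul_I_im _

theorem gil_pelaez_inversion {Ω : Type*} [MeasurableSpace Ω]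
    (μ : Measure Ω) [IsProbabilityMeasure μ] (X : Ω → ℝ) (hX : Measurable X)
    (x : ℝ) (hx : μ {ω | X ω = x} = 0)
    (φ : ℝ → ℂ)
    (hφ : ∀ t : ℝ, φ t = ∫ ω, Complex.exp (Complex.I * t * X ω) ∂μ) :
    Tendsto
      (fun p : ℝ × ℝ =>
        ∫ t in Set.Ioc p.1 p.2, (Complex.exp (-(Complex.I * t * x)) * φ t).im / t)
      ((nhdsWithin 0 (Set.Ioi 0)) ×ˢ atTop)
      (nhds (Real.pi * (1 / 2 - (μ {ω | X ω ≤ x}).toReal))) := by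
  have hYm : Measurable fun ω => X ω - x := hX.sub_const x
  set F := (nhdsWithin (0:ℝ) (Set.Ioi 0)) ×ˢ (atTop : Filter ℝ) with hFdef
  have hxne : ∀ᵐ ω ∂μ, X ω ≠ x := by
    rw [ae_iff]; simpa only [not_not] using hx
  have hA : MeasurableSet {ω | x < X ω} := measurableSet_lt measurable_const hX
  have hcompl : {ω | x < X ω}ᶜ = {ω | X ω ≤ x} := by ext ω; simp [not_lt]
  have hint_g : Integrable (fun ω => if x < X ω then π/2 else -(π/2)) μ := by
    refine Integrable.mono' (integrable_const (π/2)) ?_ ?_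
    · exact (Measurable.ite hA measurable_const measurable_const).aestronglyMeasurable
    · refine Filter.Eventually.of_forall fun ω => ?_
      by_cases h : x < X ω <;>
        simp [h, Real.norm_eq_abs, abs_div, abs_of_pos Real.pi_pos]
  have hval : ∫ ω, (if x < X ω then π/2 else -(π/2)) ∂μ
      = π * (1/2 - (μ {ω | X ω ≤ x}).toReal) := by
    have h1 := integral_add_compl hA hint_g
    have hA1 : ∫ ω in {ω | x < X ω}, (if x < X ω then π/2 else -(π/2)) ∂μ
        = (μ {ω | x < X ω}).toReal * (π/2) := by
      rw [setIntegral_congr_fun hA (fun ω hω => if_pos (show x < X ω from hω)), setIntegral_const, smul_eq_mul, measureReal_def]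
    have hA2 : ∫ ω in {ω | x < X ω}ᶜ, (if x < X ω then π/2 else -(π/2)) ∂μ
        = (μ {ω | X ω ≤ x}).toReal * (-(π/2)) := by
      rw [setIntegral_congr_fun hA.compl
        (fun ω hω => if_neg (by simpa using hω)), setIntegral_const, smul_eq_mul, hcompl, measureReal_def]
    have hμA : (μ {ω | x < X ω}).toReal = 1 - (μ {ω | X ω ≤ x}).toReal := by
      have h2 : {ω | x < X ω} = {ω | X ω ≤ x}ᶜ := by ext ω; simp [not_le]
      rw [h2, prob_compl_eq_one_sub (show MeasurableSet {ω | X ω ≤ x} from hX measurableSet_Iic),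
        ENNReal.toReal_sub_of_le prob_le_one ENNReal.one_ne_top, ENNReal.toReal_one]
    rw [← h1, hA1, hA2, hμA]
    ring
  have hDCT : Tendsto (fun p : ℝ×ℝ => ∫ ω, (Si (p.2*(X ω - x)) - Si (p.1*(X ω - x))) ∂μ)
      F (nhds (∫ ω, (if x < X ω then π/2 else -(π/2)) ∂μ)) := by
    refine tendsto_integral_filter_of_dominated_convergence (fun _ => π + 4) ?_ ?_ ?_ ?_
    · refine Filter.Eventually.of_forall fun p => ?_
      exact ((continuous_Si.measurable.comp (hYm.const_mul p.2)).sub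
        (continuous_Si.measurable.comp (hYm.const_mul p.1))).aestronglyMeasurable
    · refine Filter.Eventually.of_forall fun p => Filter.Eventually.of_forall fun ω => ?_
      rw [Real.norm_eq_abs]
      have h1 := abs_Si_le_const (p.2*(X ω - x))
      have h2 := abs_Si_le_const (p.1*(X ω - x))
      calc |Si (p.2*(X ω - x)) - Si (p.1*(X ω - x))|
          ≤ |Si (p.2*(X ω - x))| + |Si (p.1*(X ω - x))| := abs_sub _ _
        _ ≤ π + 4 := by linarith
    · exact integrable_const _
    · filter_upwards [hxne] with ω hω
      have hy0 : X ω - x ≠ 0 := sub_ne_zero.mpr hω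
      have t1 : Tendsto (fun p : ℝ×ℝ => Si (p.1*(X ω - x))) F (nhds 0) := by
        have hm : Tendsto (fun p : ℝ×ℝ => p.1*(X ω - x)) F (nhds 0) := by
          have := (tendsto_fst.mono_right nhdsWithin_le_nhds :
            Tendsto Prod.fst F (nhds 0)).mul_const (X ω - x)
          simpa using this
        exact tendsto_Si_zero.comp hm
      rcases hy0.lt_or_gt with hneg | hpos
      · have hXlt : ¬ x < X ω := not_lt.mpr (by linarith [sub_neg.mp hneg])
        rw [if_neg hXlt]
        have t2 : Tendsto (fun p : ℝ×ℝ => Si (p.2*(X ω - x))) F (nhds (-(π/2))) :=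
          tendsto_Si_atBot.comp (tendsto_snd.atTop_mul_const_of_neg hneg)
        simpa using t2.sub t1
      · have hXlt : x < X ω := by linarith [sub_pos.mp hpos]
        rw [if_pos hXlt]
        have t2 : Tendsto (fun p : ℝ×ℝ => Si (p.2*(X ω - x))) F (nhds (π/2)) :=
          tendsto_Si_atTop.comp (tendsto_snd.atTop_mul_const hpos)
        simpa using t2.sub t1
  rw [hval] at hDCT
  refine Tendsto.congr' ?_ hDCT
  have h1 : ∀ᶠ ε in nhdsWithin (0:ℝ) (Set.Ioi 0), ε ∈ Ioc (0:ℝ) 1 :=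
    eventually_of_mem (Ioc_mem_nhdsGT_of_mem ⟨le_refl 0, zero_lt_one⟩) (fun _ hx => hx)
  have h2 : ∀ᶠ a in (atTop : Filter ℝ), (1:ℝ) ≤ a := eventually_ge_atTop 1
  filter_upwards [h1.prod_mk h2] with p hp
  obtain ⟨⟨hε0, hε1⟩, ha⟩ := hp
  have hεa : p.1 ≤ p.2 := le_trans hε1 ha
  -- rewrite the statement integrand
  have e1 : (fun t : ℝ => (Complex.exp (-(Complex.I * t * x)) * φ t).im / t)
      = fun t => ∫ ω, Real.sin (t*(X ω - x))/t ∂μ := by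
    funext t
    rw [hφ t, gil_aux_char μ X hX x t, ← MeasureTheory.integral_div]
  have hProd : Integrable (Function.uncurry fun t ω => Real.sin (t*(X ω - x))/t)
      ((volume.restrict (Ioc p.1 p.2)).prod μ) := by
    haveI : IsFiniteMeasure (volume.restrict (Ioc p.1 p.2)) := by
      constructor; rw [Measure.restrict_apply_univ]; exact measure_Ioc_lt_top
    refine Integrable.mono' (integrable_const (1/p.1)) ?_ ?_
    · exact ((Real.measurable_sin.comp
        (measurable_fst.mul (hYm.comp measurable_snd))).div measurable_fst).aestronglyMeasurable
    · have hmem : ∀ᵐ q ∂((volume.restrict (Ioc p.1 p.2)).prod μ), q.1 ∈ Ioc p.1 p.2 := by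
        rw [← Measure.restrict_univ (μ := μ), Measure.prod_restrict]
        filter_upwards [ae_restrict_mem (measurableSet_Ioc.prod MeasurableSet.univ)] with q hq
        exact hq.1
      filter_upwards [hmem] with q hq
      have hq1 : 0 < q.1 := hε0.trans hq.1
      simp only [Function.uncurry]
      rw [Real.norm_eq_abs, abs_div, abs_of_pos hq1]
      calc |Real.sin (q.1*(X q.2 - x))| / q.1 ≤ 1 / q.1 := by
            gcongr
            exact Real.abs_sin_le_one _
        _ ≤ 1 / p.1 := one_div_le_one_div_of_le hε0 hq.1.le
  have e2 : ∀ ω, ∫ (t : ℝ) in Ioc p.1 p.2, Real.sin (t*(X ω - x))/t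
      = Si (p.2*(X ω - x)) - Si (p.1*(X ω - x)) := by
    intro ω
    rcases eq_or_ne (X ω - x) 0 with h | h
    · rw [h]
      simp [Si]
    · rw [← intervalIntegral.integral_of_le hεa, integral_sin_mul_div _ _ _ h]
  calc ∫ ω, (Si (p.2*(X ω - x)) - Si (p.1*(X ω - x))) ∂μ
      = ∫ ω, (∫ (t : ℝ) in Ioc p.1 p.2, Real.sin (t*(X ω - x))/t) ∂μ := by
        congr 1
        funext ω
        exact (e2 ω).symm
    _ = ∫ (t : ℝ) in Ioc p.1 p.2, ∫ ω, Real.sin (t*(X ω - x))/t ∂μ :=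
        (integral_integral_swap hProd).symm
    _ = ∫ t in Set.Ioc p.1 p.2, (Complex.exp (-(Complex.I * t * x)) * φ t).im / t := by
        rw [e1]
end

section
/- Let X be a real random variable with characteristic function φ, and let a ∈ ℝ with P(X = a) = 0. Then for every real t, (1/(4π i))·∫_ℝ [exp(−i·a·η)·φ(t+η) − exp(i·a·η)·φ(t−η)]/η dη = ½·E[exp(i·t·X)·sgn(X − a)], where the integral is understood as a principal value. -/
open MeasureTheory Complex Filter Set intervalIntegral Topology

noncomputable def Sdir (x : ℝ) : ℝ := ∫ u in (0:ℝ)..x, Real.sin u / u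

lemma sinc_meas : Measurable fun u : ℝ => Real.sin u / u :=
  Real.measurable_sin.div measurable_id

lemma sinc_abs_le (u : ℝ) : |Real.sin u / u| ≤ 1 := by
  rcases eq_or_ne u 0 with h | h
  · simp [h]
  · rw [abs_div, div_le_one (abs_pos.2 h)]; exact Real.abs_sin_le_abs

lemma sinc_intervalIntegrable (a b : ℝ) :
    IntervalIntegrable (fun u => Real.sin u / u) MeasureTheory.volume a b := by
  apply IntervalIntegrable.mono_fun (_root_.intervalIntegrable_const (c := (1:ℝ)))
  · exact sinc_meas.aestronglyMeasurable
  · exact Filter.Eventually.of_forall fun u => by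
      simp only [Real.norm_eq_abs, abs_one]; exact sinc_abs_le u

lemma Sdir_abs_le (x : ℝ) : |Sdir x| ≤ |x| := by
  have := intervalIntegral.norm_integral_le_of_norm_le_const
    (C := 1) (f := fun u => Real.sin u / u) (a := (0:ℝ)) (b := x)
    (fun u _ => by simpa only [Real.norm_eq_abs] using sinc_abs_le u)
  simpa [Sdir, Real.norm_eq_abs] using this

lemma exp_neg_mul_integral {x : ℝ} (hx : 0 < x) :
    ∫ t in Ioi (0:ℝ), Real.exp (-(x*t)) = x⁻¹ := by
  have h := MeasureTheory.integral_comp_mul_left_Ioi (fun u => Real.exp (-u)) 0 hx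
  simp only [mul_zero, integral_exp_neg_Ioi, neg_zero, Real.exp_zero, smul_eq_mul, mul_one] at h
  simpa using h

lemma dirichlet_est {A : ℝ} (hA : 0 < A) : |Sdir A - Real.pi/2| ≤ 1/A := by
  have hIne : ∀ t : ℝ, (I - (t:ℂ)) ≠ 0 := by
    intro t h
    have := congrArg Complex.im h
    simp at this
  -- the error term
  set E : ℝ → ℝ := fun t => (Complex.exp ((I - (t:ℂ)) * A) / (I - (t:ℂ))).im with hE
  have hEcont : Continuous E := by
    exact Complex.continuous_im.comp ((Continuous.cexp (by continuity)).div (by continuity) hIne)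
  have hEbound : ∀ t : ℝ, 0 < t → |E t| ≤ Real.exp (-(A*t)) := by
    intro t ht
    have h1 : |E t| ≤ ‖(Complex.exp ((I - (t:ℂ)) * A) / (I - (t:ℂ)))‖ :=
      Complex.abs_im_le_norm _
    have h2 : ‖(Complex.exp ((I - (t:ℂ)) * A))‖ = Real.exp (-(A*t)) := by
      rw [Complex.norm_exp]
      congr 1
      simp [Complex.sub_re, Complex.mul_re]
      ring
    have h3 : (1:ℝ) ≤ ‖(I - (t:ℂ))‖ := by
      have := Complex.abs_im_le_norm (I - (t:ℂ))
      simpa using this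
    refine h1.trans ?_
    rw [norm_div, h2]
    calc Real.exp (-(A*t)) / ‖(I - (t:ℂ))‖ ≤ Real.exp (-(A*t)) / 1 :=
          div_le_div_of_nonneg_left (Real.exp_nonneg _) one_pos h3
      _ = Real.exp (-(A*t)) := by rw [div_one]
  have hexpInt : IntegrableOn (fun t : ℝ => Real.exp (-(A*t))) (Ioi 0) volume := by
    have := exp_neg_integrableOn_Ioi 0 hA
    simpa [neg_mul] using this
  have hEint : IntegrableOn E (Ioi 0) volume := by
    refine Integrable.mono' hexpInt hEcont.aestronglyMeasurable ?_
    filter_upwards [self_mem_ae_restrict measurableSet_Ioi] with t ht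
    simpa [Real.norm_eq_abs] using hEbound t ht
  -- the identity Sdir A = ∫ E + π/2
  have key : Sdir A = (∫ t in Ioi (0:ℝ), E t) + Real.pi/2 := by
    -- Fubini
    have hmeas : AEStronglyMeasurable (fun p : ℝ × ℝ => Real.exp (-(p.1*p.2)) * Real.sin p.1)
        ((volume.restrict (Ioc 0 A)).prod (volume.restrict (Ioi 0))) := by
      apply Measurable.aestronglyMeasurable
      exact ((measurable_fst.mul measurable_snd).neg.exp).mul measurable_fst.sin
    have hint : Integrable (fun p : ℝ × ℝ => Real.exp (-(p.1*p.2)) * Real.sin p.1)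
        ((volume.restrict (Ioc 0 A)).prod (volume.restrict (Ioi 0))) := by
      rw [integrable_prod_iff hmeas]
      constructor
      · filter_upwards [self_mem_ae_restrict measurableSet_Ioc] with x hx
        exact ((exp_neg_integrableOn_Ioi 0 hx.1).congr_fun
          (fun t _ => by ring_nf) measurableSet_Ioi).mul_const (Real.sin x)
      · apply Integrable.mono' (integrable_const (1:ℝ))
        · exact (hmeas.norm.integral_prod_right')
        · filter_upwards [self_mem_ae_restrict measurableSet_Ioc] with x hx
          have hcalc : ∫ t in Ioi (0:ℝ), ‖Real.exp (-(x*t)) * Real.sin x‖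
              = |Real.sin x| * x⁻¹ := by
            simp only [norm_mul, Real.norm_eq_abs, Real.abs_exp]
            rw [MeasureTheory.integral_mul_const, exp_neg_mul_integral hx.1, mul_comm]
          rw [Real.norm_eq_abs, hcalc, _root_.abs_of_nonneg (by have := hx.1; positivity : (0:ℝ) ≤ |Real.sin x| * x⁻¹)]
          have hs := Real.abs_sin_le_abs (x := x)
          rw [abs_of_pos hx.1] at hs
          calc |Real.sin x| * x⁻¹ ≤ x * x⁻¹ := by
                have hxinv : (0:ℝ) ≤ x⁻¹ := inv_nonneg.2 hx.1.le
                exact mul_le_mul_of_nonneg_right hs hxinv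
            _ = 1 := mul_inv_cancel₀ hx.1.ne'
    -- swap integrals
    have hswap := MeasureTheory.integral_integral_swap
      (f := fun x t : ℝ => Real.exp (-(x*t)) * Real.sin x)
      (μ := volume.restrict (Ioc 0 A)) (ν := volume.restrict (Ioi 0)) hint
    -- LHS of hswap equals Sdir A
    have hLHS : (∫ x in Ioc (0:ℝ) A, ∫ t in Ioi (0:ℝ), Real.exp (-(x*t)) * Real.sin x)
        = Sdir A := by
      rw [Sdir, intervalIntegral.integral_of_le hA.le]
      apply setIntegral_congr_fun measurableSet_Ioc
      intro x hx
      show (∫ t in Ioi (0:ℝ), Real.exp (-(x*t)) * Real.sin x) = Real.sin x / x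
      rw [MeasureTheory.integral_mul_const, exp_neg_mul_integral hx.1, mul_comm,
        ← div_eq_mul_inv]
    -- RHS inner integral
    have hRHS : ∀ t : ℝ, 0 < t →
        (∫ x in Ioc (0:ℝ) A, Real.exp (-(x*t)) * Real.sin x)
          = E t + (1 + t^2)⁻¹ := by
      intro t ht
      have hptw : ∀ x : ℝ, Real.exp (-(x*t)) * Real.sin x
          = (Complex.exp ((I - (t:ℂ)) * x)).im := by
        intro x
        rw [Complex.exp_im]
        congr 2
        · simp [Complex.sub_re, Complex.mul_re, Complex.sub_im]
          ring
        · simp [Complex.sub_im, Complex.mul_im, Complex.sub_re]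
      have hci : IntegrableOn (fun x : ℝ => Complex.exp ((I - (t:ℂ)) * x)) (Ioc 0 A) volume := by
        apply Continuous.integrableOn_Ioc
        exact Continuous.cexp (by continuity)
      calc (∫ x in Ioc (0:ℝ) A, Real.exp (-(x*t)) * Real.sin x)
          = ∫ x in Ioc (0:ℝ) A, (Complex.exp ((I - (t:ℂ)) * x)).im := by
            exact setIntegral_congr_fun measurableSet_Ioc fun x _ => hptw x
        _ = (∫ x in Ioc (0:ℝ) A, Complex.exp ((I - (t:ℂ)) * x)).im :=
            by
            have := Complex.imCLM.integral_comp_comm hci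
            simpa using this
        _ = ((Complex.exp ((I - (t:ℂ)) * A) - 1) / (I - (t:ℂ))).im := by
            rw [← intervalIntegral.integral_of_le hA.le,
              integral_exp_mul_complex (hIne t)]
            norm_num
        _ = E t + (1 + t^2)⁻¹ := by
            have hns : Complex.normSq (I - (t:ℂ)) = 1 + t^2 := by
              simp [Complex.normSq_apply, Complex.sub_re, Complex.sub_im]
              ring
            have h1 : ((1:ℂ) / (I - (t:ℂ))).im = -(1 + t^2)⁻¹ := by
              rw [Complex.div_im, hns]
              simp [Complex.sub_re, Complex.sub_im]
            rw [sub_div, Complex.sub_im, h1, hE]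
            ring
    rw [hLHS] at hswap
    rw [hswap]
    have : (∫ t in Ioi (0:ℝ), ∫ x in Ioc (0:ℝ) A, Real.exp (-(x*t)) * Real.sin x)
        = ∫ t in Ioi (0:ℝ), (E t + (1 + t^2)⁻¹) := by
      apply setIntegral_congr_fun measurableSet_Ioi
      intro t ht
      exact hRHS t ht
    rw [this, MeasureTheory.integral_add hEint integrable_inv_one_add_sq.integrableOn]
    congr 1
    rw [integral_Ioi_inv_one_add_sq]
    simp
  rw [key]
  simp only [add_sub_cancel_right]
  have h1 : ‖∫ t in Ioi (0:ℝ), E t‖ ≤ ∫ t in Ioi (0:ℝ), Real.exp (-(A*t)) := by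
    apply MeasureTheory.norm_integral_le_of_norm_le hexpInt
    filter_upwards [self_mem_ae_restrict measurableSet_Ioi] with t ht
    simpa [Real.norm_eq_abs] using hEbound t ht
  rw [exp_neg_mul_integral hA] at h1
  rw [one_div]
  simpa [Real.norm_eq_abs] using h1

lemma Sdir_tendsto : Tendsto Sdir atTop (nhds (Real.pi/2)) := by
  rw [tendsto_iff_dist_tendsto_zero]
  apply squeeze_zero' (Filter.Eventually.of_forall fun A => dist_nonneg)
    (g := fun A => 1/A)
  · filter_upwards [eventually_gt_atTop (0:ℝ)] with A hA
    rw [Real.dist_eq]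
    exact dirichlet_est hA
  · simpa [one_div] using tendsto_inv_atTop_zero

lemma Sdir_bound (x : ℝ) (hx : 0 ≤ x) : |Sdir x| ≤ 3 := by
  rcases le_or_gt x 1 with h | h
  · calc |Sdir x| ≤ |x| := Sdir_abs_le x
      _ ≤ 1 := by rw [_root_.abs_of_nonneg hx]; exact h
      _ ≤ 3 := by norm_num
  · have h0 : 0 < x := lt_trans one_pos h
    calc |Sdir x| = |(Sdir x - Real.pi/2) + Real.pi/2| := by ring_nf
      _ ≤ |Sdir x - Real.pi/2| + |Real.pi/2| := abs_add_le _ _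
      _ ≤ 1/x + Real.pi/2 := by
          gcongr
          · exact dirichlet_est h0
          · rw [_root_.abs_of_nonneg (by positivity)]
      _ ≤ 1 + 2 := by
          gcongr
          · rw [div_le_one h0]; exact h.le
          · linarith [Real.pi_le_four]
      _ = 3 := by norm_num

lemma sin_mul_div_abs_le (b η : ℝ) : |Real.sin (η * b) / η| ≤ |b| := by
  rcases eq_or_ne η 0 with h | h
  · simp [h]
  · rw [abs_div, div_le_iff₀ (abs_pos.2 h)]
    calc |Real.sin (η * b)| ≤ |η * b| := Real.abs_sin_le_abs
      _ = |b| * |η| := by rw [abs_mul]; ring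

lemma sinMul_integrableOn_Icc (b c d : ℝ) :
    IntegrableOn (fun η => Real.sin (η * b) / η) (Icc c d) volume := by
  apply Integrable.mono' (integrable_const |b|)
  · exact ((Real.measurable_sin.comp (measurable_id.mul_const b)).div
      measurable_id).aestronglyMeasurable
  · exact Filter.Eventually.of_forall fun η => by
      simp only [Real.norm_eq_abs]
      exact sin_mul_div_abs_le b η

lemma G_eq {eps A : ℝ} (heps : 0 < eps) (hA : eps ≤ A) (b : ℝ) :
    (∫ η in {η : ℝ | eps ≤ |η| ∧ |η| ≤ A}, Real.sin (η * b) / η)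
      = 2 * Real.sign b * (Sdir (A * |b|) - Sdir (eps * |b|)) := by
  have hset : {η : ℝ | eps ≤ |η| ∧ |η| ≤ A} = Icc (-A) (-eps) ∪ Icc eps A := by
    ext η
    rcases le_or_gt 0 η with h0 | h0
    · rw [Set.mem_setOf_eq, _root_.abs_of_nonneg h0]
      simp only [Set.mem_union, Set.mem_Icc]
      constructor
      · intro h; exact Or.inr h
      · rintro (⟨h1, h2⟩ | h)
        · constructor <;> linarith
        · exact h
    · rw [Set.mem_setOf_eq, abs_of_neg h0]
      simp only [Set.mem_union, Set.mem_Icc]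
      constructor
      · rintro ⟨h1, h2⟩; exact Or.inl ⟨by linarith, by linarith⟩
      · rintro (⟨h1, h2⟩ | ⟨h1, h2⟩)
        · exact ⟨by linarith, by linarith⟩
        · constructor <;> linarith
  have hdisj : Disjoint (Icc (-A) (-eps)) (Icc eps A) := by
    rw [Set.disjoint_left]
    intro η h1 h2
    have := h1.2; have := h2.1; linarith
  rw [hset, MeasureTheory.setIntegral_union hdisj measurableSet_Icc
    (sinMul_integrableOn_Icc b _ _) (sinMul_integrableOn_Icc b _ _)]
  have hne : -A ≤ -eps := by linarith
  rw [MeasureTheory.integral_Icc_eq_integral_Ioc, MeasureTheory.integral_Icc_eq_integral_Ioc,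
    ← intervalIntegral.integral_of_le hne, ← intervalIntegral.integral_of_le hA]
  have hneg : (∫ η in (-A)..(-eps), Real.sin (η * b) / η)
      = ∫ η in eps..A, Real.sin (η * b) / η := by
    rw [← intervalIntegral.integral_comp_neg (fun η => Real.sin (η * b) / η)]
    apply intervalIntegral.integral_congr
    intro η _
    simp only
    rw [neg_mul, Real.sin_neg, neg_div_neg_eq]
  rw [hneg]
  rcases eq_or_ne b 0 with hb | hb
  · simp [hb]
  · have hb' : 0 < |b| := abs_pos.2 hb
    have hptw : ∀ η ∈ Set.uIcc eps A, Real.sin (η * b) / η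
        = Real.sign b * (Real.sin (η * |b|) / (η * |b|) * |b|) := by
      intro η hη
      have hηpos : 0 < η := by
        rcases Set.mem_uIcc.1 hη with ⟨h1, _⟩ | ⟨h1, _⟩ <;> linarith
      have hsgn : Real.sign b * Real.sin (η * |b|) = Real.sin (η * b) := by
        rcases lt_or_gt_of_ne hb with h | h
        · rw [Real.sign_of_neg h, abs_of_neg h]
          simp [Real.sin_neg]
        · rw [Real.sign_of_pos h, _root_.abs_of_pos h]
          ring_nf
      field_simp
      rw [← hsgn]
    rw [intervalIntegral.integral_congr hptw]
    have : (∫ η in eps..A, Real.sign b * (Real.sin (η * |b|) / (η * |b|) * |b|))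
        = Real.sign b * (|b| * ∫ η in eps..A, (fun u => Real.sin u / u) (η * |b|)) := by
      rw [intervalIntegral.integral_const_mul]
      congr 1
      rw [← intervalIntegral.integral_const_mul]
      apply intervalIntegral.integral_congr
      intro η _
      simp only
      ring
    rw [this, intervalIntegral.integral_comp_mul_right (fun u => Real.sin u / u) hb'.ne']
    have hadj : (∫ u in (eps*|b|)..(A*|b|), Real.sin u / u)
        = Sdir (A * |b|) - Sdir (eps * |b|) := by
      rw [Sdir, Sdir, ← intervalIntegral.integral_add_adjacent_intervals
        (sinc_intervalIntegrable 0 (eps*|b|)) (sinc_intervalIntegrable (eps*|b|) (A*|b|))]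
      ring
    rw [smul_eq_mul, ← hadj]
    field_simp
    ring

lemma Sdir_continuous : Continuous Sdir :=
  intervalIntegral.continuous_primitive (fun a b => sinc_intervalIntegrable a b) 0

lemma measurable_realSign : Measurable Real.sign := by
  have h : Real.sign = fun r : ℝ =>
      Set.indicator {x : ℝ | 0 < x} (fun _ => (1:ℝ)) r
        - Set.indicator {x : ℝ | x < 0} (fun _ => (1:ℝ)) r := by
    funext r
    rcases lt_trichotomy r 0 with h | h | h
    · rw [Real.sign_of_neg h]
      rw [Set.indicator_of_notMem (by simp [not_lt.2 h.le]), Set.indicator_of_mem (show r ∈ {x : ℝ | x < 0} from h)]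
      norm_num
    · subst h
      rw [Real.sign_zero, Set.indicator_of_notMem (by simp), Set.indicator_of_notMem (by simp)]
      norm_num
    · rw [Real.sign_of_pos h, Set.indicator_of_mem (show r ∈ {x : ℝ | 0 < x} from h),
        Set.indicator_of_notMem (by simp [not_lt.2 h.le])]
      norm_num
  rw [h]
  exact (measurable_const.indicator (measurableSet_lt measurable_const measurable_id)).sub
    (measurable_const.indicator (measurableSet_lt measurable_id measurable_const))

lemma abs_realSign_le (r : ℝ) : |Real.sign r| ≤ 1 := by
  rcases Real.sign_apply_eq r with h | h | h <;> rw [h] <;> norm_num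

theorem pinelis_Ja_formula {Ω : Type*} [MeasurableSpace Ω]
    (μ : Measure Ω) [IsProbabilityMeasure μ] (X : Ω → ℝ) (hX : Measurable X)
    (a : ℝ) (ha : μ {ω | X ω = a} = 0)
    (φ : ℝ → ℂ)
    (hφ : ∀ s : ℝ, φ s = ∫ ω, Complex.exp (Complex.I * s * X ω) ∂μ)
    (t : ℝ) :
    Tendsto
      (fun p : ℝ × ℝ =>
        (1 / (4 * Real.pi * Complex.I)) *
          ∫ η in {η : ℝ | p.1 ≤ |η| ∧ |η| ≤ p.2},
            (Complex.exp (-(Complex.I * a * η)) * φ (t + η)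
              - Complex.exp (Complex.I * a * η) * φ (t - η)) / (η : ℂ))
      ((nhdsWithin 0 (Set.Ioi 0)) ×ˢ atTop)
      (nhds ((1 / 2) * ∫ ω, Complex.exp (Complex.I * t * X ω) * (Real.sign (X ω - a) : ℂ) ∂μ)) := by
  set l : Filter (ℝ × ℝ) := (nhdsWithin 0 (Set.Ioi 0)) ×ˢ atTop with hl
  set c : ℂ := 1 / (4 * Real.pi * Complex.I) with hc
  -- integrability of characters
  have hchar : ∀ (w z : ℂ), z.re = 0 → Integrable (fun ω => w * Complex.exp (z * X ω)) μ := by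
    intro w z hz
    have hm : AEStronglyMeasurable (fun ω => w * Complex.exp (z * X ω)) μ :=
      ((Complex.measurable_exp.comp
        ((Complex.measurable_ofReal.comp hX).const_mul z)).const_mul w).aestronglyMeasurable
    apply Integrable.mono' (integrable_const ‖w‖) hm
    refine Filter.Eventually.of_forall fun ω => ?_
    rw [norm_mul, Complex.norm_exp]
    have hre : (z * (X ω : ℂ)).re = 0 := by
      rw [Complex.mul_re]
      simp [hz]
    rw [hre, Real.exp_zero, mul_one]
  -- Step A: pointwise-in-η identity
  have stepA : ∀ η : ℝ,
      (Complex.exp (-(Complex.I * a * η)) * φ (t + η)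
        - Complex.exp (Complex.I * a * η) * φ (t - η)) / (η : ℂ)
      = ∫ ω, Complex.exp (Complex.I * t * X ω) * (2 * Complex.I)
          * ((Real.sin (η * (X ω - a)) / η : ℝ) : ℂ) ∂μ := by
    intro η
    rcases eq_or_ne η 0 with hη | hη
    · subst hη
      simp
    · rw [hφ (t+η), hφ (t-η)]
      have hz1 : (Complex.I * ((t:ℝ)+(η:ℝ) : ℝ)).re = 0 := by
        simp [Complex.mul_re]
      have hz2 : (Complex.I * ((t:ℝ)-(η:ℝ) : ℝ)).re = 0 := by
        simp [Complex.mul_re]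
      rw [← MeasureTheory.integral_const_mul, ← MeasureTheory.integral_const_mul,
        ← MeasureTheory.integral_sub
          (hchar (Complex.exp (-(Complex.I * a * η))) (Complex.I * ((t+η : ℝ) : ℂ)) hz1)
          (hchar (Complex.exp (Complex.I * a * η)) (Complex.I * ((t-η : ℝ) : ℂ)) hz2),
        ← MeasureTheory.integral_div]
      apply MeasureTheory.integral_congr_ae
      refine Filter.Eventually.of_forall fun ω => ?_
      set x : ℝ := X ω with hx
      show (Complex.exp (-(Complex.I * a * η)) * Complex.exp (Complex.I * ((t+η:ℝ):ℂ) * x)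
        - Complex.exp (Complex.I * a * η) * Complex.exp (Complex.I * ((t-η:ℝ):ℂ) * x)) / η
        = Complex.exp (Complex.I * t * x) * (2 * Complex.I) * ((Real.sin (η * (x - a)) / η : ℝ) : ℂ)
      rw [← Complex.exp_add, ← Complex.exp_add]
      have e1 : -(Complex.I * a * η) + Complex.I * ((t+η:ℝ):ℂ) * x
          = Complex.I * t * x + (((η * (x - a) : ℝ) : ℂ) * Complex.I) := by
        push_cast; ring
      have e2 : Complex.I * a * η + Complex.I * ((t-η:ℝ):ℂ) * x
          = Complex.I * t * x + (-((η * (x - a) : ℝ) : ℂ) * Complex.I) := by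
        push_cast; ring
      rw [e1, e2, Complex.exp_add, Complex.exp_add, Complex.exp_mul_I, Complex.exp_mul_I,
        Complex.cos_neg, Complex.sin_neg, ← Complex.ofReal_sin, Complex.ofReal_div]
      ring
  -- the limit integrand
  set f' : Ω → ℂ := fun ω => Complex.exp (Complex.I * t * X ω) * (2 * Complex.I)
      * ((2 * Real.sign (X ω - a) * (Real.pi / 2 - 0) : ℝ) : ℂ) with hf'
  set F : ℝ × ℝ → Ω → ℂ := fun p ω =>
    Complex.exp (Complex.I * t * X ω) * (2 * Complex.I) *
      ((2 * Real.sign (X ω - a) *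
        (Sdir (p.2 * |X ω - a|) - Sdir (p.1 * |X ω - a|)) : ℝ) : ℂ) with hF
  have hev1 : ∀ᶠ p : ℝ × ℝ in l, 0 < p.1 :=
    Filter.Eventually.prod_inl (eventually_mem_nhdsWithin) atTop
  have hev2 : ∀ᶠ p : ℝ × ℝ in l, p.1 < 1 :=
    Filter.Eventually.prod_inl
      ((eventually_lt_nhds one_pos).filter_mono nhdsWithin_le_nhds) atTop
  have hev3 : ∀ᶠ p : ℝ × ℝ in l, 1 ≤ p.2 :=
    Filter.Eventually.prod_inr (eventually_ge_atTop 1) _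
  have habs1 : ∀ ω, ‖(Complex.exp (Complex.I * t * X ω))‖ = 1 := by
    intro ω
    rw [Complex.norm_exp]
    have : (Complex.I * t * (X ω : ℂ)).re = 0 := by
      simp [Complex.mul_re, Complex.mul_im]
    rw [this, Real.exp_zero]
  -- dominated convergence
  have hDCT : Tendsto (fun p => ∫ ω, F p ω ∂μ) l (𝓝 (∫ ω, f' ω ∂μ)) := by
    apply MeasureTheory.tendsto_integral_filter_of_dominated_convergence
      (bound := fun _ => (24:ℝ))
    · refine Filter.Eventually.of_forall fun p => ?_
      have hm1 : Measurable fun ω => Complex.exp (Complex.I * t * X ω) :=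
        Complex.measurable_exp.comp
          ((Complex.measurable_ofReal.comp hX).const_mul (Complex.I * t))
      have hm2 : Measurable fun ω =>
          (2 * Real.sign (X ω - a) *
            (Sdir (p.2 * |X ω - a|) - Sdir (p.1 * |X ω - a|)) : ℝ) :=
        ((measurable_realSign.comp (hX.sub_const a)).const_mul 2).mul
          ((Sdir_continuous.measurable.comp (((hX.sub_const a).abs).const_mul p.2)).sub
            (Sdir_continuous.measurable.comp (((hX.sub_const a).abs).const_mul p.1)))
      exact ((hm1.mul measurable_const).mul (Complex.measurable_ofReal.comp hm2)).aestronglyMeasurable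
    · filter_upwards [hev1, hev3] with p hp1 hp3
      refine Filter.Eventually.of_forall fun ω => ?_
      have hb2 : 0 ≤ p.2 * |X ω - a| := mul_nonneg (by linarith) (abs_nonneg _)
      have hb1 : 0 ≤ p.1 * |X ω - a| := mul_nonneg hp1.le (abs_nonneg _)
      rw [norm_mul, norm_mul, habs1,
        Complex.norm_real, Real.norm_eq_abs]
      have h2I : ‖(2 * Complex.I)‖ = 2 := by simp
      rw [h2I, one_mul]
      have hs := abs_realSign_le (X ω - a)
      have hD : |Sdir (p.2 * |X ω - a|) - Sdir (p.1 * |X ω - a|)| ≤ 6 := by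
        have h1 := Sdir_bound _ hb2
        have h2 := Sdir_bound _ hb1
        have := abs_sub (Sdir (p.2 * |X ω - a|)) (Sdir (p.1 * |X ω - a|))
        calc |Sdir (p.2 * |X ω - a|) - Sdir (p.1 * |X ω - a|)|
            ≤ |Sdir (p.2 * |X ω - a|)| + |Sdir (p.1 * |X ω - a|)| := by
              rw [sub_eq_add_neg]
              exact (abs_add_le _ _).trans (by rw [abs_neg])
          _ ≤ 6 := by linarith
      have habs : |2 * Real.sign (X ω - a) *
          (Sdir (p.2 * |X ω - a|) - Sdir (p.1 * |X ω - a|))| ≤ 12 := by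
        rw [abs_mul, abs_mul, (by norm_num : |(2:ℝ)| = 2)]
        have h1 : |Real.sign (X ω - a)| * |Sdir (p.2 * |X ω - a|) - Sdir (p.1 * |X ω - a|)| ≤ 6 := by
          calc |Real.sign (X ω - a)| * |Sdir (p.2 * |X ω - a|) - Sdir (p.1 * |X ω - a|)|
              ≤ 1 * 6 := mul_le_mul hs hD (abs_nonneg _) zero_le_one
            _ = 6 := by norm_num
        rw [mul_assoc]
        linarith
      linarith
    · exact integrable_const 24
    · have haeX : ∀ᵐ ω ∂μ, X ω ≠ a := by
        have hset : {ω | ¬ X ω ≠ a} = {ω | X ω = a} := by ext ω; simp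
        rw [ae_iff, hset]; exact ha
      filter_upwards [haeX] with ω hω
      have hbne : X ω - a ≠ 0 := sub_ne_zero.2 hω
      have habs : 0 < |X ω - a| := abs_pos.2 hbne
      have h2 : Tendsto (fun p : ℝ × ℝ => Sdir (p.2 * |X ω - a|)) l (𝓝 (Real.pi/2)) :=
        Sdir_tendsto.comp (Filter.tendsto_snd.atTop_mul_const habs)
      have hfst : Tendsto (fun p : ℝ × ℝ => p.1 * |X ω - a|) l (𝓝 0) := by
        have h := (Filter.tendsto_fst (f := nhdsWithin (0:ℝ) (Set.Ioi 0))
          (g := (atTop : Filter ℝ))).mono_right nhdsWithin_le_nhds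
        have := h.mul_const |X ω - a|
        simpa using this
      have h1 : Tendsto (fun p : ℝ × ℝ => Sdir (p.1 * |X ω - a|)) l (𝓝 0) :=
        squeeze_zero_norm
          (fun p => by
            simpa [Real.norm_eq_abs] using Sdir_abs_le (p.1 * |X ω - a|))
          (by simpa using hfst.abs)
      have hreal : Tendsto (fun p : ℝ × ℝ => 2 * Real.sign (X ω - a) *
          (Sdir (p.2 * |X ω - a|) - Sdir (p.1 * |X ω - a|))) l
          (𝓝 (2 * Real.sign (X ω - a) * (Real.pi/2 - 0))) :=
        (h2.sub h1).const_mul _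
      have hcplx := (Complex.continuous_ofReal.tendsto _).comp hreal
      have hfin := hcplx.const_mul (Complex.exp (Complex.I * t * X ω) * (2 * Complex.I))
      simp only [hF, hf']
      exact hfin
  -- eventual equality
  have heq : ∀ᶠ p : ℝ × ℝ in l,
      c * ∫ ω, F p ω ∂μ
        = c * ∫ η in {η : ℝ | p.1 ≤ |η| ∧ |η| ≤ p.2},
            (Complex.exp (-(Complex.I * a * η)) * φ (t + η)
              - Complex.exp (Complex.I * a * η) * φ (t - η)) / (η : ℂ) := by
    filter_upwards [hev1, hev2, hev3] with p hp1 hp2 hp3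
    have hpA : p.1 ≤ p.2 := le_trans hp2.le hp3
    have hDm : MeasurableSet {η : ℝ | p.1 ≤ |η| ∧ |η| ≤ p.2} := by
      have hrw : {η : ℝ | p.1 ≤ |η| ∧ |η| ≤ p.2}
          = {η : ℝ | p.1 ≤ |η|} ∩ {η : ℝ | |η| ≤ p.2} := rfl
      rw [hrw]
      exact (measurableSet_le measurable_const _root_.continuous_abs.measurable).inter
        (measurableSet_le _root_.continuous_abs.measurable measurable_const)
    haveI hfin : IsFiniteMeasure (volume.restrict {η : ℝ | p.1 ≤ |η| ∧ |η| ≤ p.2}) := by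
      constructor
      rw [Measure.restrict_apply_univ]
      refine lt_of_le_of_lt (measure_mono (fun η hη => ?_))
        (measure_Icc_lt_top (a := -p.2) (b := p.2))
      exact abs_le.1 hη.2
    have hprod : Integrable (Function.uncurry fun (η : ℝ) (ω : Ω) =>
        Complex.exp (Complex.I * t * X ω) * (2 * Complex.I)
          * ((Real.sin (η * (X ω - a)) / η : ℝ) : ℂ))
        ((volume.restrict {η : ℝ | p.1 ≤ |η| ∧ |η| ≤ p.2}).prod μ) := by
      have hmeas : AEStronglyMeasurable (Function.uncurry fun (η : ℝ) (ω : Ω) =>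
          Complex.exp (Complex.I * t * X ω) * (2 * Complex.I)
            * ((Real.sin (η * (X ω - a)) / η : ℝ) : ℂ))
          ((volume.restrict {η : ℝ | p.1 ≤ |η| ∧ |η| ≤ p.2}).prod μ) := by
        apply Measurable.aestronglyMeasurable
        refine Measurable.mul (Measurable.mul ?_ measurable_const) ?_
        · exact Complex.measurable_exp.comp
            (((Complex.measurable_ofReal.comp (hX.comp measurable_snd))).const_mul
              (Complex.I * t))
        · refine Complex.measurable_ofReal.comp ?_
          exact (Real.measurable_sin.comp
            (measurable_fst.mul ((hX.comp measurable_snd).sub_const a))).div measurable_fst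
      apply Integrable.mono' (integrable_const (2/p.1)) hmeas
      have hae : ∀ᵐ q ∂((volume.restrict {η : ℝ | p.1 ≤ |η| ∧ |η| ≤ p.2}).prod μ),
          q.1 ∈ {η : ℝ | p.1 ≤ |η| ∧ |η| ≤ p.2} := by
        have hμu : μ = μ.restrict Set.univ := (Measure.restrict_univ).symm
        rw [hμu, Measure.prod_restrict]
        filter_upwards [ae_restrict_mem (hDm.prod MeasurableSet.univ)] with q hq
        exact hq.1
      filter_upwards [hae] with q hq
      rw [Function.uncurry]
      rw [norm_mul, norm_mul, habs1,
        Complex.norm_real, Real.norm_eq_abs]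
      have h2I : ‖(2 * Complex.I)‖ = 2 := by simp
      rw [h2I, one_mul]
      have hsin : |Real.sin (q.1 * (X q.2 - a)) / q.1| ≤ 1 / p.1 := by
        rw [abs_div]
        exact div_le_div₀ zero_le_one
          (abs_le.2 ⟨Real.neg_one_le_sin _, Real.sin_le_one _⟩) hp1 hq.1
      calc 2 * |Real.sin (q.1 * (X q.2 - a)) / q.1| ≤ 2 * (1/p.1) := by linarith
        _ = 2 / p.1 := by ring
    have hswap := MeasureTheory.integral_integral_swap hprod
    have hchain : (∫ η in {η : ℝ | p.1 ≤ |η| ∧ |η| ≤ p.2},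
        (Complex.exp (-(Complex.I * a * η)) * φ (t + η)
          - Complex.exp (Complex.I * a * η) * φ (t - η)) / (η : ℂ))
        = ∫ ω, F p ω ∂μ := by
      calc (∫ η in {η : ℝ | p.1 ≤ |η| ∧ |η| ≤ p.2},
          (Complex.exp (-(Complex.I * a * η)) * φ (t + η)
            - Complex.exp (Complex.I * a * η) * φ (t - η)) / (η : ℂ))
          = ∫ η in {η : ℝ | p.1 ≤ |η| ∧ |η| ≤ p.2},
              ∫ ω, Complex.exp (Complex.I * t * X ω) * (2 * Complex.I)
                * ((Real.sin (η * (X ω - a)) / η : ℝ) : ℂ) ∂μ :=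
            MeasureTheory.setIntegral_congr_fun hDm (fun η _ => stepA η)
        _ = ∫ ω, (∫ η in {η : ℝ | p.1 ≤ |η| ∧ |η| ≤ p.2},
              Complex.exp (Complex.I * t * X ω) * (2 * Complex.I)
                * ((Real.sin (η * (X ω - a)) / η : ℝ) : ℂ)) ∂μ := hswap
        _ = ∫ ω, F p ω ∂μ := by
            refine MeasureTheory.integral_congr_ae (Filter.Eventually.of_forall fun ω => ?_)
            show (∫ η in {η : ℝ | p.1 ≤ |η| ∧ |η| ≤ p.2},
              Complex.exp (Complex.I * t * X ω) * (2 * Complex.I)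
                * ((Real.sin (η * (X ω - a)) / η : ℝ) : ℂ)) = F p ω
            rw [hF]
            simp only
            rw [← G_eq hp1 hpA (X ω - a)]
            have hgint : Integrable (fun η => Real.sin (η * (X ω - a)) / η)
                (volume.restrict {η : ℝ | p.1 ≤ |η| ∧ |η| ≤ p.2}) := by
              apply Integrable.mono' (integrable_const |X ω - a|)
              · exact ((Real.measurable_sin.comp
                  (measurable_id.mul_const (X ω - a))).div measurable_id).aestronglyMeasurable
              · refine Filter.Eventually.of_forall fun η => ?_
                simp only [Real.norm_eq_abs]
                exact sin_mul_div_abs_le (X ω - a) η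
            calc (∫ η in {η : ℝ | p.1 ≤ |η| ∧ |η| ≤ p.2},
                Complex.exp (Complex.I * t * X ω) * (2 * Complex.I)
                  * ((Real.sin (η * (X ω - a)) / η : ℝ) : ℂ))
                = Complex.exp (Complex.I * t * X ω) * (2 * Complex.I)
                    * ∫ η in {η : ℝ | p.1 ≤ |η| ∧ |η| ≤ p.2},
                      ((Real.sin (η * (X ω - a)) / η : ℝ) : ℂ) :=
                  MeasureTheory.integral_const_mul _ _
              _ = Complex.exp (Complex.I * t * X ω) * (2 * Complex.I)
                    * ((∫ η in {η : ℝ | p.1 ≤ |η| ∧ |η| ≤ p.2},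
                        Real.sin (η * (X ω - a)) / η : ℝ) : ℂ) := by
                  congr 1
                  simpa using Complex.ofRealCLM.integral_comp_comm hgint
    rw [hchain]
  -- final limit value
  have hfinal : c * ∫ ω, f' ω ∂μ
      = (1 / 2) * ∫ ω, Complex.exp (Complex.I * t * X ω) * (Real.sign (X ω - a) : ℂ) ∂μ := by
    have hptw : ∀ ω, f' ω = (2 * (Real.pi : ℂ) * Complex.I) *
        (Complex.exp (Complex.I * t * X ω) * ((Real.sign (X ω - a) : ℝ) : ℂ)) := by
      intro ω
      rw [hf']
      simp only
      push_cast
      ring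
    rw [MeasureTheory.integral_congr_ae (Filter.Eventually.of_forall hptw),
      MeasureTheory.integral_const_mul, hc, ← mul_assoc]
    congr 1
    have hπ : (Real.pi : ℂ) ≠ 0 := Complex.ofReal_ne_zero.2 Real.pi_ne_zero
    have hI : Complex.I ≠ 0 := Complex.I_ne_zero
    field_simp
    ring
  have H1 : Tendsto (fun p => c * ∫ ω, F p ω ∂μ) l (𝓝 (c * ∫ ω, f' ω ∂μ)) :=
    hDCT.const_mul c
  have H2 := H1.congr' heq
  rw [hfinal] at H2
  exact H2
end
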